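/- Let G and N be groups and let Φ, Ψ : G →* MulAut N be group homomorphisms. Let F_Φ, F_Ψ : SingleObj G ⥤ Cat be the functors sending the unique object of SingleObj G to Cat.of (SingleObj N) and sending each endomorphism g : G to the endofunctor of SingleObj N induced by the monoid homomorphism underlying Φ g (respectively Ψ g). If the categories Grothendieck F_Φ and Grothendieck F_Ψ are equivalent, then the semidirect products N ⋊[Φ] G and N ⋊[Ψ] G are isomorphic as groups. -/

import Mathlib

open CategoryTheory

/-- The functor `SingleObj G ⥤ Cat` sending the unique object to `Cat.of (SingleObj N)`
and each `g : G` to the endofunctor of `SingleObj N` induced by the monoid homomorphism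
underlying `Φ g`. -/
def semidirectActionFunctor {G N : Type*} [Group G] [Group N] (Φ : G →* MulAut N) :
    SingleObj G ⥤ Cat where
  obj _ := Cat.of (SingleObj N)
  map g := (SingleObj.mapHom N N (Φ g).toMonoidHom).toCatHom
  map_id _ := by
    show (SingleObj.mapHom N N (Φ 1).toMonoidHom).toCatHom = _
    rw [map_one]
    rfl
  map_comp f g := by
    show (SingleObj.mapHom N N (Φ (g * f)).toMonoidHom).toCatHom = _
    rw [map_mul]
    rfl

lemma singleObj_eqToHom_eq_one {M : Type*} [Monoid M] {a b : SingleObj M} (h : a = b) :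
    eqToHom h = (1 : M) := by subst h; rfl

lemma groth_comp_fiber' {G N : Type*} [Group G] [Group N] (Φ : G →* MulAut N)
    {X Y Z : Grothendieck (semidirectActionFunctor Φ)} (f : X ⟶ Y) (g : Y ⟶ Z) :
    (show N from (f ≫ g).fiber)
      = (show N from g.fiber) * (Φ g.base) (show N from f.fiber) := by
  show eqToHom _ ≫ _ ≫ _ = _
  erw [SingleObj.comp_as_mul (M := N), SingleObj.comp_as_mul (M := N),
    singleObj_eqToHom_eq_one, mul_one]
  rfl

set_option maxHeartbeats 1000000 in
/-- The Grothendieck construction of the action functor is the one-object category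
on `N ⋊[Φ] G`. -/
def grothSemidirectEquiv {G N : Type*} [Group G] [Group N] (Φ : G →* MulAut N) :
    Grothendieck (semidirectActionFunctor Φ) ≌ SingleObj (N ⋊[Φ] G) where
  functor :=
    { obj := fun _ => SingleObj.star _
      map := fun f => ⟨f.fiber, f.base⟩
      map_id := fun _ => rfl
      map_comp := fun f g => by
        show (⟨(f ≫ g).fiber, (f ≫ g).base⟩ : N ⋊[Φ] G) =
          (⟨g.fiber, g.base⟩ : N ⋊[Φ] G) * ⟨f.fiber, f.base⟩
        ext
        · exact groth_comp_fiber' Φ f g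
        · rfl }
  inverse :=
    { obj := fun _ => ⟨SingleObj.star G, SingleObj.star N⟩
      map := fun p => ⟨p.right, p.left⟩
      map_id := fun _ => rfl
      map_comp := fun f g => by
        refine Grothendieck.ext _ _ rfl ?_
        show eqToHom _ ≫ _ = _
        erw [SingleObj.comp_as_mul (M := N), singleObj_eqToHom_eq_one, mul_one]
        exact (groth_comp_fiber' Φ
          (⟨f.right, f.left⟩ : Grothendieck.Hom _ _) ⟨g.right, g.left⟩).symm }
  unitIso := Iso.refl _
  counitIso := Iso.refl _
  functor_unitIso_comp := fun X => by
    rw [Iso.refl_hom, Iso.refl_hom, NatTrans.id_app, NatTrans.id_app]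
    exact (Category.comp_id _).trans (CategoryTheory.Functor.map_id _ X)

/-- An equivalence of one-object categories induces an isomorphism of the
endomorphism monoids. -/
noncomputable def mulEquivOfSingleObjEquiv {M M' : Type*} [Monoid M] [Monoid M']
    (e : SingleObj M ≌ SingleObj M') : M ≃* M' :=
  MulEquiv.ofBijective
    ({ toFun := fun x => e.functor.map (X := SingleObj.star M) (Y := SingleObj.star M) x
       map_one' := e.functor.map_id _
       map_mul' := fun a b => e.functor.map_comp (X := SingleObj.star M) b a } : M →* M')
    ⟨fun _ _ hh => e.functor.map_injective hh, fun y => e.functor.map_surjective y⟩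

theorem grothendieck_equivalence_implies_semidirectProduct_iso
    {G N : Type*} [Group G] [Group N] (Φ Ψ : G →* MulAut N)
    (h : Nonempty
      (Grothendieck (semidirectActionFunctor Φ) ≌ Grothendieck (semidirectActionFunctor Ψ))) :
    Nonempty ((N ⋊[Φ] G) ≃* (N ⋊[Ψ] G)) := by
  exact ⟨mulEquivOfSingleObjEquiv
    ((grothSemidirectEquiv Φ).symm.trans (h.some.trans (grothSemidirectEquiv Ψ)))⟩
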